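/- Let d ≥ 1 be an integer, R > 0, and let K : [0,∞) → ℝ be a bounded, nonnegative, measurable function supported in [0,R]. For j ≥ 1 set m_{K,j} := ∫₀^R s^{j−1} K(s) ds and assume m_{K,d} > 0; define the kernel moment ratios B_p := m_{K,d+p}/m_{K,d}. Set c₁ᵈ = 2d, c₂ᵈ = 8d², c₃ᵈ = 4d(d−1). Let F : [0,∞) → ℝ be continuous with F(t) = τ₁ t + τ₂ t² + τ₃ t³ + o(t³) as t → 0⁺ and τ₁ > 0; define I_F(h) := (∫₀^R u^{d−1} K(u) F(hu) du)/m_{K,d}, Ψ_F(h) := c₂ᵈ I_F(h) − c₃ᵈ I_F(√2 h) − c₁ᵈ I_F(2h), and φ₂(a) := c₂ᵈ F(a) − c₃ᵈ F(√2 a) − c₁ᵈ F(2a). Then the relative bias (Ψ_F(h) − φ₂(B₄^{1/4} h)) / φ₂(B₄^{1/4} h) converges, as h → 0⁺, to (B₁ − B₄^{1/4}) / B₄^{1/4}. -/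

import Mathlib

open MeasureTheory Filter Topology Asymptotics

set_option maxHeartbeats 1000000 in
/-- Mean relative error of the curvature constraint estimator in the continuous
(non-differentiable) case: the relative bias
`(Ψ_F(h) − φ₂(B₄^{1/4} h)) / φ₂(B₄^{1/4} h)` converges, as `h → 0⁺`, to
`(B₁ − B₄^{1/4}) / B₄^{1/4}`. -/
theorem stmt_16 (d : ℕ) (hd : 1 ≤ d) (R : ℝ) (hR : 0 < R)
    (K : ℝ → ℝ) (hKmeas : Measurable K) (hKnonneg : ∀ s, 0 ≤ K s)
    (hKbdd : ∃ M, ∀ s, K s ≤ M)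
    (hKsupp : ∀ s, R < s → K s = 0)
    (mK : ℕ → ℝ) (hmK : ∀ j, mK j = ∫ s in (0:ℝ)..R, s ^ (j - 1) * K s)
    (hmKd : 0 < mK d)
    (B : ℕ → ℝ) (hB : ∀ p, B p = mK (d + p) / mK d)
    (c1 c2 c3 : ℝ) (hc1 : c1 = 2 * (d : ℝ)) (hc2 : c2 = 8 * (d : ℝ) ^ 2)
    (hc3 : c3 = 4 * (d : ℝ) * ((d : ℝ) - 1))
    (F : ℝ → ℝ) (hFcont : ContinuousOn F (Set.Ici 0))
    (τ₁ τ₂ τ₃ : ℝ) (hτ₁ : 0 < τ₁)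
    (hF : (fun t => F t - (τ₁ * t + τ₂ * t ^ 2 + τ₃ * t ^ 3))
      =o[𝓝[>] (0:ℝ)] fun t => t ^ 3)
    (IF : ℝ → ℝ)
    (hIF : ∀ h, IF h = (∫ u in (0:ℝ)..R, u ^ (d - 1) * K u * F (h * u)) / mK d)
    (Ψ : ℝ → ℝ)
    (hΨ : ∀ h, Ψ h = c2 * IF h - c3 * IF (Real.sqrt 2 * h) - c1 * IF (2 * h))
    (φ₂ : ℝ → ℝ)
    (hφ₂ : ∀ a, φ₂ a = c2 * F a - c3 * F (Real.sqrt 2 * a) - c1 * F (2 * a)) :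
    Tendsto
      (fun h => (Ψ h - φ₂ ((B 4) ^ ((1:ℝ)/4) * h)) / φ₂ ((B 4) ^ ((1:ℝ)/4) * h))
      (𝓝[>] (0:ℝ)) (𝓝 ((B 1 - (B 4) ^ ((1:ℝ)/4)) / (B 4) ^ ((1:ℝ)/4))) := by
  have hd1 : (1:ℝ) ≤ (d:ℝ) := by exact_mod_cast hd
  set s2 := Real.sqrt 2 with hs2
  have hs2sq : s2 ^ 2 = 2 := Real.sq_sqrt (by norm_num)
  have hs2pos : 0 < s2 := Real.sqrt_pos.mpr (by norm_num)
  obtain ⟨M, hM⟩ := hKbdd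
  set M' : ℝ := max M 0 with hM'
  have hKabs : ∀ s, |K s| ≤ M' := fun s => by
    rw [abs_of_nonneg (hKnonneg s)]; exact le_trans (hM s) (le_max_left _ _)
  -- integrability of u^n * K u on intervals
  have hint : ∀ n : ℕ, IntervalIntegrable (fun s => s ^ n * K s) volume 0 R := by
    intro n
    rw [intervalIntegrable_iff, Set.uIoc_of_le hR.le]
    refine Integrable.mono' (integrable_const (R ^ n * M'))
      ((measurable_id.pow_const n).mul hKmeas).aestronglyMeasurable ?_
    refine (ae_restrict_iff' measurableSet_Ioc).mpr (ae_of_all _ fun s hs => ?_)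
    have h1 : |s ^ n| ≤ R ^ n := by
      rw [abs_of_nonneg (pow_nonneg hs.1.le n)]
      exact pow_le_pow_left₀ hs.1.le hs.2 n
    calc ‖s ^ n * K s‖ = |s ^ n| * |K s| := abs_mul _ _
      _ ≤ R ^ n * M' := mul_le_mul h1 (hKabs s) (abs_nonneg _)
          (le_trans (abs_nonneg _) h1)
  have hmKnonneg : ∀ j : ℕ, 0 ≤ mK j := by
    intro j
    rw [hmK j]
    apply intervalIntegral.integral_nonneg hR.le
    intro u hu
    exact mul_nonneg (pow_nonneg hu.1 _) (hKnonneg u)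
  -- F 0 = 0
  have hPtend : Tendsto (fun t : ℝ => τ₁ * t + τ₂ * t ^ 2 + τ₃ * t ^ 3)
      (𝓝[>] (0:ℝ)) (𝓝 0) := by
    have hc : Continuous (fun t : ℝ => τ₁ * t + τ₂ * t ^ 2 + τ₃ * t ^ 3) := by continuity
    have := hc.tendsto 0
    simp only [mul_zero, zero_pow, add_zero, ne_eq, OfNat.ofNat_ne_zero,
      not_false_eq_true] at this
    exact this.mono_left nhdsWithin_le_nhds
  have hcube : Tendsto (fun t : ℝ => t ^ 3) (𝓝[>] (0:ℝ)) (𝓝 0) := by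
    have := (continuous_pow 3).tendsto (0:ℝ)
    simpa using this.mono_left nhdsWithin_le_nhds
  have hFtend0 : Tendsto F (𝓝[>] (0:ℝ)) (𝓝 0) := by
    have h1 : Tendsto (fun t => F t - (τ₁ * t + τ₂ * t ^ 2 + τ₃ * t ^ 3))
        (𝓝[>] (0:ℝ)) (𝓝 0) := hF.isBigO.trans_tendsto hcube
    have := h1.add hPtend
    simpa using this
  have hF0 : F 0 = 0 := by
    have h2 : Tendsto F (𝓝[>] (0:ℝ)) (𝓝 (F 0)) :=
      ((hFcont 0 Set.self_mem_Ici).tendsto).mono_left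
        (nhdsWithin_mono _ Set.Ioi_subset_Ici_self)
    exact tendsto_nhds_unique h2 hFtend0
  -- quadratic bound on F t - τ₁ t near 0
  obtain ⟨δ, hδpos, hball⟩ : ∃ δ > 0, ∀ t : ℝ, 0 < t → t < δ →
      |F t - (τ₁ * t + τ₂ * t ^ 2 + τ₃ * t ^ 3)| ≤ |t ^ 3| := by
    have := hF.def one_pos
    rw [eventually_nhdsWithin_iff, Metric.eventually_nhds_iff] at this
    obtain ⟨ε, hε, hb⟩ := this
    refine ⟨ε, hε, fun t ht htε => ?_⟩
    have := hb (show dist t 0 < ε by rwa [Real.dist_eq, sub_zero, abs_of_pos ht]) ht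
    simpa using this
  set Cb : ℝ := |τ₂| + (|τ₃| + 1) * δ with hCb
  have hCbnn : 0 ≤ Cb := by positivity
  have hFb : ∀ t : ℝ, 0 ≤ t → t < δ → |F t - τ₁ * t| ≤ Cb * t ^ 2 := by
    intro t ht htδ
    rcases eq_or_lt_of_le ht with h0 | h0
    · simp [← h0, hF0]
    · have h1 := hball t h0 htδ
      have h2 : |F t - τ₁ * t| ≤ |t ^ 3| + |τ₂ * t ^ 2 + τ₃ * t ^ 3| := by
        calc |F t - τ₁ * t|
            = |(F t - (τ₁ * t + τ₂ * t ^ 2 + τ₃ * t ^ 3)) + (τ₂ * t ^ 2 + τ₃ * t ^ 3)| := by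
              ring_nf
          _ ≤ |F t - (τ₁ * t + τ₂ * t ^ 2 + τ₃ * t ^ 3)| + |τ₂ * t ^ 2 + τ₃ * t ^ 3| :=
              abs_add_le _ _
          _ ≤ |t ^ 3| + |τ₂ * t ^ 2 + τ₃ * t ^ 3| := by linarith
      have h3 : |t ^ 3| = t ^ 3 := abs_of_nonneg (by positivity)
      have h4 : |τ₂ * t ^ 2 + τ₃ * t ^ 3| ≤ |τ₂| * t ^ 2 + |τ₃| * t ^ 3 := by
        calc |τ₂ * t ^ 2 + τ₃ * t ^ 3| ≤ |τ₂ * t ^ 2| + |τ₃ * t ^ 3| := abs_add_le _ _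
          _ = |τ₂| * t ^ 2 + |τ₃| * t ^ 3 := by
              rw [abs_mul, abs_mul, abs_of_nonneg (show (0:ℝ) ≤ t ^ 2 by positivity),
                abs_of_nonneg (show (0:ℝ) ≤ t ^ 3 by positivity)]
      have h6 : t ^ 3 ≤ δ * t ^ 2 := by nlinarith [sq_nonneg t, h0.le]
      have h7 : |τ₃| * t ^ 3 ≤ |τ₃| * (δ * t ^ 2) :=
        mul_le_mul_of_nonneg_left h6 (abs_nonneg τ₃)
      have h8 : Cb * t ^ 2 = |τ₂| * t ^ 2 + (|τ₃| + 1) * δ * t ^ 2 := by rw [hCb]; ring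
      rw [h8]
      linarith [h2, h3, h4, h6, h7]
  -- F t / t → τ₁
  have keyF : Tendsto (fun t => F t / t) (𝓝[>] (0:ℝ)) (𝓝 τ₁) := by
    rw [← tendsto_sub_nhds_zero_iff]
    refine squeeze_zero_norm' (a := fun t => Cb * t) ?_ ?_
    · filter_upwards [Ioo_mem_nhdsGT_of_mem (Set.mem_Ico.mpr ⟨le_refl (0:ℝ), hδpos⟩)]
        with t ht
      have htpos : 0 < t := ht.1
      have : F t / t - τ₁ = (F t - τ₁ * t) / t := by field_simp
      rw [Real.norm_eq_abs, this, abs_div, abs_of_pos htpos]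
      rw [div_le_iff₀ htpos]
      calc |F t - τ₁ * t| ≤ Cb * t ^ 2 := hFb t htpos.le ht.2
        _ = Cb * t * t := by ring
    · have : Tendsto (fun t : ℝ => Cb * t) (𝓝 (0:ℝ)) (𝓝 (Cb * 0)) :=
        (continuous_const.mul continuous_id).tendsto 0
      simpa using this.mono_left nhdsWithin_le_nhds
  -- IF h / h → τ₁ * B 1
  have hdd : d - 1 + 1 = d := Nat.succ_pred_eq_of_pos hd
  have hupow : ∀ u : ℝ, u ^ d = u ^ (d-1) * u := fun u => by rw [← pow_succ, hdd]
  have keyI : Tendsto (fun h => IF h / h) (𝓝[>] (0:ℝ)) (𝓝 (τ₁ * B 1)) := by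
    rw [← tendsto_sub_nhds_zero_iff]
    refine squeeze_zero_norm' (a := fun h => (Cb * mK (d + 2) / mK d) * h) ?_ ?_
    · have hδR : 0 < δ / R := div_pos hδpos hR
      filter_upwards [Ioo_mem_nhdsGT_of_mem (Set.mem_Ico.mpr ⟨le_refl (0:ℝ), hδR⟩)]
        with h hh
      have hpos : 0 < h := hh.1
      have hhR : h * R < δ := by
        rw [← lt_div_iff₀ hR]; exact hh.2
      -- integrability of the F-integrand
      have hiF : IntervalIntegrable (fun u => u ^ (d-1) * K u * F (h * u)) volume 0 R := by
        rw [intervalIntegrable_iff, Set.uIoc_of_le hR.le]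
        have hcomp : ContinuousOn (fun u => F (h * u)) (Set.Ici 0) := by
          apply hFcont.comp ((continuous_const.mul continuous_id).continuousOn)
          intro u hu
          exact mul_nonneg hpos.le hu
        obtain ⟨CF, hCF⟩ := (isCompact_Icc (a := (0:ℝ)) (b := R)).exists_bound_of_continuousOn
          (hcomp.mono (fun x hx => hx.1))
        refine Integrable.mono' (integrable_const (R ^ (d-1) * M' * |CF|))
          ?_ ?_
        · exact (((measurable_id.pow_const (d-1)).mul hKmeas).aestronglyMeasurable).mul
            ((hcomp.mono (fun x hx => hx.1)).aestronglyMeasurable measurableSet_Icc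
              |>.mono_measure (Measure.restrict_mono Set.Ioc_subset_Icc_self le_rfl))
        · refine (ae_restrict_iff' measurableSet_Ioc).mpr (ae_of_all _ fun u hu => ?_)
          have h1 : |u ^ (d-1)| ≤ R ^ (d-1) := by
            rw [abs_of_nonneg (pow_nonneg hu.1.le _)]
            exact pow_le_pow_left₀ hu.1.le hu.2 _
          have h2 : ‖F (h * u)‖ ≤ |CF| := le_trans (hCF u ⟨hu.1.le, hu.2⟩)
            (le_abs_self CF)
          calc ‖u ^ (d-1) * K u * F (h * u)‖
              = |u ^ (d-1)| * |K u| * ‖F (h * u)‖ := by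
                rw [norm_mul, norm_mul]; rfl
            _ ≤ R ^ (d-1) * M' * |CF| := by
                apply mul_le_mul (mul_le_mul h1 (hKabs u) (abs_nonneg _)
                  (le_trans (abs_nonneg _) h1)) h2 (norm_nonneg _)
                positivity
      have hiG : IntervalIntegrable (fun u => u ^ (d-1) * K u * (τ₁ * (h * u)))
          volume 0 R := by
        have : (fun u : ℝ => u ^ (d-1) * K u * (τ₁ * (h * u)))
            = fun u => (τ₁ * h) * (u ^ d * K u) := by
          funext u
          rw [hupow u]; ring
        rw [this]
        exact (hint d).const_mul _
      -- the G integral equals τ₁ * h * mK (d+1)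
      have hGval : (∫ u in (0:ℝ)..R, u ^ (d-1) * K u * (τ₁ * (h * u)))
          = τ₁ * h * mK (d+1) := by
        have heq : (fun u : ℝ => u ^ (d-1) * K u * (τ₁ * (h * u)))
            = fun u => (τ₁ * h) * (u ^ d * K u) := by
          funext u
          rw [hupow u]; ring
        rw [heq, intervalIntegral.integral_const_mul, hmK (d+1)]
        norm_num
      -- bound the difference of integrals
      have hsub : (∫ u in (0:ℝ)..R, u ^ (d-1) * K u * F (h * u))
            - τ₁ * h * mK (d+1)
          = ∫ u in (0:ℝ)..R, (u ^ (d-1) * K u * F (h * u)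
            - u ^ (d-1) * K u * (τ₁ * (h * u))) := by
        rw [intervalIntegral.integral_sub hiF hiG, hGval]
      have hbound : |(∫ u in (0:ℝ)..R, u ^ (d-1) * K u * F (h * u)) - τ₁ * h * mK (d+1)|
          ≤ Cb * h ^ 2 * mK (d+2) := by
        rw [hsub, ← Real.norm_eq_abs]
        have hgi : IntervalIntegrable (fun u => (Cb * h ^ 2) * (u ^ (d+1) * K u))
            volume 0 R := (hint (d+1)).const_mul _
        have := intervalIntegral.norm_integral_le_abs_of_norm_le
          (f := fun u => u ^ (d-1) * K u * F (h * u) - u ^ (d-1) * K u * (τ₁ * (h * u)))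
          (g := fun u => (Cb * h ^ 2) * (u ^ (d+1) * K u)) (μ := volume) (a := 0) (b := R)
          ?_ hgi
        · refine le_trans this ?_
          rw [intervalIntegral.integral_const_mul]
          have hval : (∫ u in (0:ℝ)..R, u ^ (d+1) * K u) = mK (d+2) := by
            rw [hmK (d+2)]
            norm_num
          rw [hval, abs_of_nonneg (mul_nonneg (by positivity) (hmKnonneg _))]
        · rw [Set.uIoc_of_le hR.le]
          refine (ae_restrict_iff' measurableSet_Ioc).mpr (ae_of_all _ fun u hu => ?_)
          have hu0 : 0 < u := hu.1
          have huδ : h * u < δ := lt_of_le_of_lt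
            (by nlinarith [hu.2, hpos.le] : h * u ≤ h * R) hhR
          have hFbu := hFb (h * u) (mul_nonneg hpos.le hu0.le) huδ
          have hKnn := hKnonneg u
          calc ‖u ^ (d-1) * K u * F (h * u) - u ^ (d-1) * K u * (τ₁ * (h * u))‖
              = u ^ (d-1) * K u * |F (h * u) - τ₁ * (h * u)| := by
                rw [Real.norm_eq_abs, ← mul_sub, abs_mul,
                  abs_of_nonneg (mul_nonneg (pow_nonneg hu0.le _) hKnn)]
            _ ≤ u ^ (d-1) * K u * (Cb * (h * u) ^ 2) := by
                apply mul_le_mul_of_nonneg_left hFbu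
                  (mul_nonneg (pow_nonneg hu0.le _) hKnn)
            _ = (Cb * h ^ 2) * (u ^ (d-1) * u ^ 2 * K u) := by ring
            _ = (Cb * h ^ 2) * (u ^ (d+1) * K u) := by
                rw [← pow_add, show d - 1 + 2 = d + 1 by omega]
      -- conclude
      have heq : IF h / h - τ₁ * B 1
          = ((∫ u in (0:ℝ)..R, u ^ (d-1) * K u * F (h * u)) - τ₁ * h * mK (d+1))
            / (mK d * h) := by
        rw [hIF h, hB 1]
        field_simp
      rw [Real.norm_eq_abs, heq, abs_div, abs_of_pos (mul_pos hmKd hpos)]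
      rw [div_le_iff₀ (mul_pos hmKd hpos)]
      calc |(∫ u in (0:ℝ)..R, u ^ (d-1) * K u * F (h * u)) - τ₁ * h * mK (d+1)|
          ≤ Cb * h ^ 2 * mK (d+2) := hbound
        _ = Cb * mK (d+2) / mK d * h * (mK d * h) := by
            field_simp
    · have : Tendsto (fun h : ℝ => Cb * mK (d+2) / mK d * h) (𝓝 (0:ℝ))
          (𝓝 (Cb * mK (d+2) / mK d * 0)) := (continuous_const.mul continuous_id).tendsto 0
      simpa using this.mono_left nhdsWithin_le_nhds
  -- scaling lemma
  have hscale : ∀ (G : ℝ → ℝ) (L b : ℝ), 0 < b →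
      Tendsto (fun t => G t / t) (𝓝[>] (0:ℝ)) (𝓝 L) →
      Tendsto (fun h => G (b * h) / h) (𝓝[>] (0:ℝ)) (𝓝 (b * L)) := by
    intro G L b hb hG
    have hmap : Tendsto (fun h : ℝ => b * h) (𝓝[>] (0:ℝ)) (𝓝[>] (0:ℝ)) := by
      rw [tendsto_nhdsWithin_iff]
      constructor
      · have : Tendsto (fun h : ℝ => b * h) (𝓝 0) (𝓝 (b * 0)) :=
          (continuous_const.mul continuous_id).tendsto 0
        simpa using this.mono_left nhdsWithin_le_nhds
      · filter_upwards [self_mem_nhdsWithin] with h hh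
        exact mul_pos hb hh
    have h1 := (hG.comp hmap).const_mul b
    refine Tendsto.congr' ?_ h1
    filter_upwards [self_mem_nhdsWithin] with h hh
    have hbh : b * h ≠ 0 := (mul_pos hb hh).ne'
    have hh0 : (h:ℝ) ≠ 0 := hh.ne'
    show b * (G (b * h) / (b * h)) = G (b * h) / h
    field_simp
  -- B 4 > 0 and a := B 4 ^ (1/4) > 0
  have hmK4pos : 0 < mK (d + 4) := by
    rcases lt_or_eq_of_le (hmKnonneg (d+4)) with h | h
    · exact h
    · exfalso
      have hIoc : ∀ j : ℕ, mK j = ∫ s in Set.Ioc (0:ℝ) R, s ^ (j-1) * K s := by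
        intro j
        rw [hmK j, intervalIntegral.integral_of_le hR.le]
      have hint4 : IntegrableOn (fun s => s ^ (d+4-1) * K s) (Set.Ioc 0 R) volume := by
        have := hint (d+4-1)
        rwa [intervalIntegrable_iff, Set.uIoc_of_le hR.le] at this
      have hnn : (0:ℝ → ℝ) ≤ᵐ[volume.restrict (Set.Ioc 0 R)]
          fun s => s ^ (d+4-1) * K s := by
        refine (ae_restrict_iff' measurableSet_Ioc).mpr (ae_of_all _ fun s hs => ?_)
        exact mul_nonneg (pow_nonneg hs.1.le _) (hKnonneg s)
      have hzero : (fun s => s ^ (d+4-1) * K s) =ᵐ[volume.restrict (Set.Ioc 0 R)] 0 := by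
        apply (setIntegral_eq_zero_iff_of_nonneg_ae hnn hint4).mp
        rw [← hIoc (d+4), ← h]
      have hKzero : (fun s => s ^ (d-1) * K s) =ᵐ[volume.restrict (Set.Ioc 0 R)] 0 := by
        have hmem := ae_restrict_mem (μ := volume) (measurableSet_Ioc (a := (0:ℝ)) (b := R))
        filter_upwards [hzero, hmem] with s hs hsmem
        have hspos : 0 < s := hsmem.1
        have : K s = 0 := by
          by_contra hK
          have : s ^ (d+4-1) * K s ≠ 0 :=
            mul_ne_zero (pow_ne_zero _ hspos.ne') hK
          exact this hs
        simp [this]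
      have : mK d = 0 := by
        rw [hIoc d]
        exact MeasureTheory.integral_eq_zero_of_ae hKzero
      linarith
  have hB4pos : 0 < B 4 := by
    rw [hB 4]; exact div_pos hmK4pos hmKd
  set a : ℝ := (B 4) ^ ((1:ℝ)/4) with ha
  have hapos : 0 < a := Real.rpow_pos_of_pos hB4pos _
  -- c4 > 0
  set c4 : ℝ := c2 - s2 * c3 - 2 * c1 with hc4
  have hc4pos : 0 < c4 := by
    have hs2lt : s2 < 3/2 := by nlinarith [hs2sq, hs2pos]
    have key : s2 * ((d:ℝ) * ((d:ℝ) - 1)) ≤ (3/2) * ((d:ℝ) * ((d:ℝ) - 1)) :=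
      mul_le_mul_of_nonneg_right hs2lt.le (by nlinarith [hd1])
    rw [hc4, hc1, hc2, hc3]
    nlinarith [hd1, key]
  -- limits of numerator and denominator scaled by h
  have hΨlim : Tendsto (fun h => Ψ h / h) (𝓝[>] (0:ℝ)) (𝓝 (c4 * τ₁ * B 1)) := by
    have h1 : Tendsto (fun h => IF (s2 * h) / h) (𝓝[>] (0:ℝ)) (𝓝 (s2 * (τ₁ * B 1))) := by
      have := hscale (fun t => IF t) (τ₁ * B 1) s2 hs2pos keyI
      simpa using this
    have h2 : Tendsto (fun h => IF (2 * h) / h) (𝓝[>] (0:ℝ)) (𝓝 (2 * (τ₁ * B 1))) := by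
      have := hscale (fun t => IF t) (τ₁ * B 1) 2 two_pos keyI
      simpa using this
    have h3 := ((keyI.const_mul c2).sub (h1.const_mul c3)).sub (h2.const_mul c1)
    have heq : (fun h => Ψ h / h) = fun h =>
        c2 * (IF h / h) - c3 * (IF (s2 * h) / h) - c1 * (IF (2 * h) / h) := by
      funext h
      rw [hΨ h]
      ring
    rw [heq]
    convert h3 using 2
    ring
  have hDlim : Tendsto (fun h => φ₂ (a * h) / h) (𝓝[>] (0:ℝ)) (𝓝 (c4 * τ₁ * a)) := by
    have h0 : Tendsto (fun h => F (a * h) / h) (𝓝[>] (0:ℝ)) (𝓝 (a * τ₁)) :=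
      hscale F τ₁ a hapos keyF
    have h1 : Tendsto (fun h => F (s2 * a * h) / h) (𝓝[>] (0:ℝ)) (𝓝 (s2 * a * τ₁)) :=
      hscale F τ₁ (s2 * a) (mul_pos hs2pos hapos) keyF
    have h2 : Tendsto (fun h => F (2 * a * h) / h) (𝓝[>] (0:ℝ)) (𝓝 (2 * a * τ₁)) :=
      hscale F τ₁ (2 * a) (mul_pos two_pos hapos) keyF
    have h3 := ((h0.const_mul c2).sub (h1.const_mul c3)).sub (h2.const_mul c1)
    have heq : (fun h => φ₂ (a * h) / h) = fun h =>
        c2 * (F (a * h) / h) - c3 * (F (s2 * a * h) / h) - c1 * (F (2 * a * h) / h) := by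
      funext h
      rw [hφ₂ (a * h)]
      rw [show s2 * (a * h) = s2 * a * h by ring, show 2 * (a * h) = 2 * a * h by ring]
      ring
    rw [heq]
    convert h3 using 2
    ring
  -- assemble
  have hLD : c4 * τ₁ * a ≠ 0 := (mul_pos (mul_pos hc4pos hτ₁) hapos).ne'
  have hdiv := (hΨlim.sub hDlim).div hDlim hLD
  have heq2 : (fun h => (Ψ h / h - φ₂ (a * h) / h) / (φ₂ (a * h) / h))
      =ᶠ[𝓝[>] (0:ℝ)] fun h => (Ψ h - φ₂ (a * h)) / φ₂ (a * h) := by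
    filter_upwards [self_mem_nhdsWithin] with h hh
    have hh0 : (h:ℝ) ≠ 0 := hh.ne'
    rw [div_sub_div_same, div_div_div_comm, div_self hh0, div_one]
  have hfin := hdiv.congr' heq2
  have hval : (c4 * τ₁ * B 1 - c4 * τ₁ * a) / (c4 * τ₁ * a) = (B 1 - a) / a := by
    rw [show c4 * τ₁ * B 1 - c4 * τ₁ * a = (c4 * τ₁) * (B 1 - a) by ring,
      show c4 * τ₁ * a = (c4 * τ₁) * a by ring,
      mul_div_mul_left _ _ (mul_pos hc4pos hτ₁).ne']
  rw [hval] at hfin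
  exact hfin
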